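/- Let X be a proper geodesic δ-hyperbolic space, Γ a group acting properly by isometries on X with basepoint o, k ⊆ X a compact set containing o, and K the closed 6δ-neighbourhood of k. Then there exist a finite subset S ⊆ Γ and r ≥ 0 such that for every T ≥ 0, U_K^T ∩ Γ·o is contained in the union of the shadows O_o(βo,r) over all β ∈ S·Γ_k with d(o,βo) ≥ T − r. -/

import Mathlib

open Filter Topology Metric Set MeasureTheory Pointwise
open scoped symmDiff ENNReal NNReal

noncomputable section

namespace SPR

variable {X : Type} [MetricSpace X]

/-- The Gromov product of `x` and `y` seen from `z`. -/
def gromovProd (x y z : X) : ℝ := (dist x z + dist y z - dist x y) / 2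

/-- `X` is `δ`-hyperbolic: the four point inequality holds. -/
def GromovHyperbolicWith (δ : ℝ) (X : Type) [MetricSpace X] : Prop :=
  ∀ x y z t : X, min (gromovProd x y t) (gromovProd y z t) - δ ≤ gromovProd x z t

/-- `c` parametrizes a geodesic (by arc length) on the set `I` of times. -/
def IsGeodesicOn (c : ℝ → X) (I : Set ℝ) : Prop :=
  ∀ s ∈ I, ∀ t ∈ I, dist (c s) (c t) = |s - t|

/-- Every pair of points of `X` is joined by a geodesic. -/
def GeodesicSpace (X : Type) [MetricSpace X] : Prop :=
  ∀ x y : X, ∃ c : ℝ → X,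
    c 0 = x ∧ c (dist x y) = y ∧ IsGeodesicOn c (Set.Icc 0 (dist x y))

/-- A geodesic ray, parametrized by `[0,∞)`. -/
def IsGeodesicRay (c : ℝ → X) : Prop := IsGeodesicOn c (Set.Ici 0)

/-- The action of `Γ` on `X` is (metrically) proper. -/
def ProperAction (Γ : Type) (X : Type) [Group Γ] [MetricSpace X] [MulAction Γ X] : Prop :=
  ∀ L : Set X, IsCompact L → {γ : Γ | ∃ x ∈ L, γ • x ∈ L}.Finite

variable {Γ : Type} [Group Γ] [MulAction Γ X]

/-- The critical exponent (exponential growth rate) of a subset `S` of `Γ`,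
for the action on `X` with base point `o`. -/
def critExp (o : X) (S : Set Γ) : ℝ :=
  Filter.limsup
    (fun r : ℝ => Real.log (Nat.card {γ : Γ // γ ∈ S ∧ dist o (γ • o) ≤ r}) / r)
    Filter.atTop

/-- The critical exponent `h_Γ` of the whole group. -/
def fullCritExp (Γ : Type) [Group Γ] [MulAction Γ X] (o : X) : ℝ :=
  critExp o (Set.univ : Set Γ)

/-- The set `Γ_K` of elements `γ ∈ Γ` for which there are `x, y ∈ K` and a geodesic
from `x` to `γ y` meeting `Γ ⬝ K` only inside `K ∪ γ K`. -/
def gammaK (Γ : Type) [Group Γ] [MulAction Γ X] (K : Set X) : Set Γ :=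
  {γ : Γ | ∃ x ∈ K, ∃ y ∈ K, ∃ c : ℝ → X,
    c 0 = x ∧ c (dist x (γ • y)) = γ • y ∧ IsGeodesicOn c (Set.Icc 0 (dist x (γ • y))) ∧
    (c '' Set.Icc 0 (dist x (γ • y))) ∩ (⋃ g : Γ, g • K) ⊆ K ∪ γ • K}

/-- The entropy at infinity `h_Γ^∞`. -/
def entropyAtInfinity (Γ : Type) [Group Γ] [MulAction Γ X] (o : X) : ℝ :=
  sInf {h : ℝ | ∃ K : Set X, IsCompact K ∧ h = critExp o (gammaK Γ K)}

/-- The action of `Γ` on `X` is strongly positively recurrent (it has a growth gap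
at infinity). -/
def SPRAction (Γ : Type) [Group Γ] [MulAction Γ X] (o : X) : Prop :=
  entropyAtInfinity Γ o < fullCritExp Γ o

/-! ### The Gromov boundary -/

theorem gromovProd_ge (x y z w : X) :
    gromovProd x y z - dist z w ≤ gromovProd x y w := by
  have h1 : dist x z ≤ dist x w + dist w z := dist_triangle x w z
  have h2 : dist y z ≤ dist y w + dist w z := dist_triangle y w z
  have h3 : dist w z = dist z w := dist_comm w z
  simp only [gromovProd]
  linarith

/-- A sequence converging to infinity. -/
def SeqToInf (o : X) (u : ℕ → X) : Prop :=
  Tendsto (fun p : ℕ × ℕ => gromovProd (u p.1) (u p.2) o) atTop atTop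

/-- Two sequences converging to infinity define the same boundary point. -/
def seqRel (o : X) (u v : {u : ℕ → X // SeqToInf o u}) : Prop :=
  Tendsto (fun n => gromovProd (u.1 n) (v.1 n) o) atTop atTop

/-- The Gromov boundary of `X` (described with base point `o`). -/
def GromovBoundary (o : X) : Type := Quot (seqRel o)

def mkBoundary (o : X) (u : {u : ℕ → X // SeqToInf o u}) : GromovBoundary o :=
  Quot.mk (seqRel o) u

instance (o : X) : TopologicalSpace (GromovBoundary o) :=
  inferInstanceAs (TopologicalSpace (Quot (seqRel o)))

instance (o : X) : MeasurableSpace (GromovBoundary o) := borel (GromovBoundary o)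

/-- A ray `c` ends at the boundary point `ξ`. -/
def endsAt (o : X) (c : ℝ → X) (ξ : GromovBoundary o) : Prop :=
  ∃ h : SeqToInf o (fun n : ℕ => c n), mkBoundary o ⟨fun n : ℕ => c n, h⟩ = ξ

/-- The bordification `X ∪ ∂X` of `X`. -/
def Bord (o : X) : Type := X ⊕ GromovBoundary o

def Bord.ofX (o : X) (x : X) : Bord o := Sum.inl x

def Bord.ofB (o : X) (ξ : GromovBoundary o) : Bord o := Sum.inr ξ

/-- Extension of the Gromov product: a point of `X` and a boundary point,
seen from `base`; infimum over representative sequences of the liminf. -/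
def gpPB (o base x : X) (ξ : GromovBoundary o) : ℝ :=
  sInf {t : ℝ | ∃ u : {u : ℕ → X // SeqToInf o u}, mkBoundary o u = ξ ∧
    t = Filter.liminf (fun n => gromovProd x (u.1 n) base) Filter.atTop}

/-- Extension of the Gromov product to two boundary points, seen from `base`. -/
def gpBB (o base : X) (ξ η : GromovBoundary o) : EReal :=
  sInf {t : EReal | ∃ u v : {u : ℕ → X // SeqToInf o u},
    mkBoundary o u = ξ ∧ mkBoundary o v = η ∧
    t = Filter.liminf (fun n => ((gromovProd (u.1 n) (v.1 n) base : ℝ) : EReal)) Filter.atTop}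

/-- The Gromov product of two points of the bordification `X ∪ ∂X`, seen from `base`. -/
def gpE (o base : X) (p q : X ⊕ GromovBoundary o) : EReal :=
  match p, q with
  | Sum.inl x, Sum.inl y => ((gromovProd x y base : ℝ) : EReal)
  | Sum.inl x, Sum.inr ξ => ((gpPB o base x ξ : ℝ) : EReal)
  | Sum.inr ξ, Sum.inl x => ((gpPB o base x ξ : ℝ) : EReal)
  | Sum.inr ξ, Sum.inr η => gpBB o base ξ η

/-- The topology of the bordification: generated by the open subsets of `X`
together with the sets `{p | ⟨p,ξ⟩_o > T}`. -/
instance (o : X) : TopologicalSpace (Bord o) :=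
  TopologicalSpace.generateFrom
    ({V : Set (Bord o) | ∃ U : Set X, IsOpen U ∧ V = Bord.ofX o '' U} ∪
     {V : Set (Bord o) | ∃ (ξ : GromovBoundary o) (T : ℝ),
        V = {p : Bord o | (T : EReal) < gpE o o p (Bord.ofB o ξ)}})

/-- `c` together with its interval of definition `I` is a geodesic joining
the point `x ∈ X` to the point `p` of the bordification. -/
def JoinsBord (o : X) (c : ℝ → X) (I : Set ℝ) (x : X) (p : Bord o) : Prop :=
  (∃ y : X, p = Bord.ofX o y ∧ I = Set.Icc 0 (dist x y) ∧ c 0 = x ∧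
    c (dist x y) = y ∧ IsGeodesicOn c I) ∨
  (∃ ξ : GromovBoundary o, p = Bord.ofB o ξ ∧ I = Set.Ici 0 ∧ c 0 = x ∧
    IsGeodesicRay c ∧ endsAt o c ξ)

/-- The shadow `O_o(x,r)`: points of `X ∪ ∂X` joined to `o` by a geodesic
meeting the closed ball `B(x,r)`. -/
def shadow (o x : X) (r : ℝ) : Set (Bord o) :=
  {p | ∃ (c : ℝ → X) (I : Set ℝ), JoinsBord o c I o p ∧ ∃ t ∈ I, c t ∈ Metric.closedBall x r}

/-- The `K`-radial limit set. -/
def radialLimitSet (o : X) (Γ : Type) [Group Γ] [MulAction Γ X] (K : Set X) :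
    Set (GromovBoundary o) :=
  {ξ | ∃ c : ℝ → X, IsGeodesicRay c ∧ endsAt o c ξ ∧
    {γ : Γ | ∃ t : ℝ, 0 ≤ t ∧ c t ∈ γ • K}.Infinite}

/-- The radial limit set. -/
def radialLimitSetFull (o : X) (Γ : Type) [Group Γ] [MulAction Γ X] :
    Set (GromovBoundary o) :=
  {ξ | ∃ K : Set X, IsCompact K ∧ ξ ∈ radialLimitSet o Γ K}

/-- The set `𝓛_K` of endpoints of geodesic rays starting in `K` and meeting
`Γ ⬝ K` only inside `K`. -/
def LK (o : X) (Γ : Type) [Group Γ] [MulAction Γ X] (K : Set X) :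
    Set (GromovBoundary o) :=
  {ξ | ∃ c : ℝ → X, IsGeodesicRay c ∧ c 0 ∈ K ∧ endsAt o c ξ ∧
    (c '' Set.Ici 0) ∩ (⋃ g : Γ, g • K) ⊆ K}

/-- The neighbourhood `U_K^T` of `𝓛_K` in the bordification. -/
def UKT (o : X) (Γ : Type) [Group Γ] [MulAction Γ X] (K : Set X) (T : ℝ) :
    Set (Bord o) :=
  {p | ∃ ξ ∈ LK o Γ K, (T : EReal) ≤ gpE o o p (Bord.ofB o ξ)}

/-! ### The boundary action -/

section IsometricAction

variable [IsIsometricSMul Γ X]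

theorem gromovProd_smul (γ : Γ) (x y o : X) :
    gromovProd (γ • x) (γ • y) o = gromovProd x y (γ⁻¹ • o) := by
  have h1 : dist (γ • x) o = dist x (γ⁻¹ • o) := by
    conv_lhs => rw [← smul_inv_smul γ o]
    exact dist_smul γ x (γ⁻¹ • o)
  have h2 : dist (γ • y) o = dist y (γ⁻¹ • o) := by
    conv_lhs => rw [← smul_inv_smul γ o]
    exact dist_smul γ y (γ⁻¹ • o)
  have h3 : dist (γ • x) (γ • y) = dist x y := dist_smul γ x y
  simp only [gromovProd, h1, h2, h3]

theorem tendsto_gp_smul {ι : Type} {l : Filter ι} (o : X) (γ : Γ) {u v : ι → X}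
    (h : Tendsto (fun n => gromovProd (u n) (v n) o) l atTop) :
    Tendsto (fun n => gromovProd (γ • u n) (γ • v n) o) l atTop := by
  refine tendsto_atTop_mono (fun n => ?_)
    (tendsto_atTop_add_const_right _ (-(dist o (γ⁻¹ • o))) h)
  have h1 := gromovProd_ge (u n) (v n) o (γ⁻¹ • o)
  rw [gromovProd_smul]
  linarith

/-- The action of `Γ` on the Gromov boundary. -/
def boundarySmul (o : X) (γ : Γ) : GromovBoundary o → GromovBoundary o :=
  Quot.map
    (fun u => ⟨fun n => γ • u.1 n,
      tendsto_gp_smul o γ (u := fun p : ℕ × ℕ => u.1 p.1) (v := fun p : ℕ × ℕ => u.1 p.2) u.2⟩)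
    (fun _ _ huv => tendsto_gp_smul o γ huv)

/-- The diagonal action of `γ` on `∂X × ∂X`. -/
def diagSmul (o : X) (γ : Γ) (p : GromovBoundary o × GromovBoundary o) :
    GromovBoundary o × GromovBoundary o :=
  (boundarySmul o γ p.1, boundarySmul o γ p.2)

end IsometricAction

/-! ### Patterson–Sullivan measures -/

/-- A slowly increasing function, in the sense of Patterson. -/
def SlowlyIncreasing (θ : ℝ → ℝ) : Prop :=
  ∀ ε : ℝ, 0 < ε → ∃ t₀ : ℝ, ∀ t : ℝ, t₀ ≤ t → ∀ u : ℝ, 0 ≤ u →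
    θ (t + u) ≤ Real.exp (ε * u) * θ t

/-- The Patterson weight `θ(d(o,γo)) e^{-s d(o,γo)}`. -/
def psWeight (Γ : Type) [Group Γ] [MulAction Γ X] (o : X) (θ : ℝ → ℝ) (s : ℝ)
    (γ : Γ) : ℝ :=
  θ (dist o (γ • o)) * Real.exp (-s * dist o (γ • o))

/-- `ν` is a Patterson–Sullivan measure of `Γ` on the Gromov boundary:
a probability measure obtained as a weak-* limit, along some sequence `sₙ ↓ h_Γ`,
of the normalized Patterson-weighted orbital measures. -/
def IsPSMeasure (Γ : Type) [Group Γ] [MulAction Γ X] (o : X)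
    (ν : Measure (GromovBoundary o)) : Prop :=
  IsProbabilityMeasure ν ∧
  ∃ θ : ℝ → ℝ, (∀ t, 0 < θ t) ∧ Monotone θ ∧ SlowlyIncreasing θ ∧
    (∀ s : ℝ, Summable (psWeight Γ o θ s) ↔ fullCritExp Γ o < s) ∧
    ∃ sq : ℕ → ℝ, (∀ n, fullCritExp Γ o < sq n) ∧
      Tendsto sq atTop (nhds (fullCritExp Γ o)) ∧
      ∀ f : Bord o → ℝ, Continuous f → (∃ M : ℝ, ∀ p, |f p| ≤ M) →
        Tendsto (fun n =>
            (∑' γ : Γ, psWeight Γ o θ (sq n) γ * f (Bord.ofX o (γ • o))) /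
            (∑' γ : Γ, psWeight Γ o θ (sq n) γ)) atTop
          (nhds (∫ ξ, f (Bord.ofB o ξ) ∂ν))

/-! ### The Bowen–Margulis current and the abstract geodesic flow -/

section BowenMargulis

variable [IsIsometricSMul Γ X]

/-- `μ` is a Bowen–Margulis current associated to the Patterson–Sullivan measure `ν`:
a `Γ`-invariant measure on `∂X × ∂X`, vanishing on the diagonal, absolutely continuous
with respect to `ν ⊗ ν` with density comparable to `e^{2 h_Γ ⟨η,ξ⟩_o}`. -/
def IsBMCurrent (Γ : Type) [Group Γ] [MulAction Γ X] [IsIsometricSMul Γ X] (o : X)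
    (ν : Measure (GromovBoundary o))
    (μ : Measure (GromovBoundary o × GromovBoundary o)) : Prop :=
  μ {p | p.1 = p.2} = 0 ∧
  (∀ γ : Γ, Measure.map (diagSmul o γ) μ = μ) ∧
  μ ≪ ν.prod ν ∧
  ∃ C₀ : ℝ, 0 < C₀ ∧
    ∀ᵐ p ∂(ν.prod ν), p.1 ≠ p.2 →
      C₀⁻¹ * Real.exp (2 * fullCritExp Γ o * (gpBB o o p.1 p.2).toReal)
          ≤ (μ.rnDeriv (ν.prod ν) p).toReal ∧
      (μ.rnDeriv (ν.prod ν) p).toReal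
          ≤ C₀ * Real.exp (2 * fullCritExp Γ o * (gpBB o o p.1 p.2).toReal)

/-- The phase space `SX = ∂X × ∂X × ℝ` of the abstract geodesic flow. -/
def SX (o : X) : Type := (GromovBoundary o × GromovBoundary o) × ℝ

instance (o : X) : MeasurableSpace (SX o) :=
  inferInstanceAs (MeasurableSpace ((GromovBoundary o × GromovBoundary o) × ℝ))

/-- The geodesic flow on `SX`. -/
def flowSX (o : X) (t : ℝ) (v : SX o) : SX o := (v.1, v.2 + t)

/-- The cocycle `β(γ,ξ) = h_Γ⁻¹ log (d(γ⁻¹)_*ν/dν)(ξ)`. -/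
def betaCocycle (Γ : Type) [Group Γ] [MulAction Γ X] [IsIsometricSMul Γ X] (o : X)
    (ν : Measure (GromovBoundary o)) (γ : Γ) (ξ : GromovBoundary o) : ℝ :=
  (fullCritExp Γ o)⁻¹ *
    Real.log ((Measure.map (boundarySmul o γ⁻¹) ν).rnDeriv ν ξ).toReal

/-- The (measurable) action of `Γ` on `SX`:
`γ ⬝ (η,ξ,t) = (γη, γξ, t + κ_γ(η,ξ))`. -/
def smulSX (Γ : Type) [Group Γ] [MulAction Γ X] [IsIsometricSMul Γ X] (o : X)
    (ν : Measure (GromovBoundary o)) (γ : Γ) (v : SX o) : SX o :=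
  ((boundarySmul o γ v.1.1, boundarySmul o γ v.1.2),
    v.2 + (betaCocycle Γ o ν γ v.1.2 - betaCocycle Γ o ν γ v.1.1) / 2)

/-- The Bowen–Margulis measure `m = μ ⊗ dt` on `SX`. -/
def bmMeasure (o : X) (μ : Measure (GromovBoundary o × GromovBoundary o)) :
    Measure (SX o) :=
  μ.prod (volume : Measure ℝ)

/-- `D` is a Borel fundamental domain for the `Γ`-action on `SX`. -/
def IsFundDom (Γ : Type) [Group Γ] [MulAction Γ X] [IsIsometricSMul Γ X] (o : X)
    (ν : Measure (GromovBoundary o)) (μ : Measure (GromovBoundary o × GromovBoundary o))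
    (D : Set (SX o)) : Prop :=
  MeasurableSet D ∧ ∀ᵐ v ∂(bmMeasure o μ), ∃! γ : Γ, smulSX Γ o ν γ v ∈ D

/-- A subset of `SX` is `Γ`-invariant up to measure zero. -/
def GammaInvariant (Γ : Type) [Group Γ] [MulAction Γ X] [IsIsometricSMul Γ X] (o : X)
    (ν : Measure (GromovBoundary o)) (μ : Measure (GromovBoundary o × GromovBoundary o))
    (B : Set (SX o)) : Prop :=
  ∀ γ : Γ, bmMeasure o μ (B ∆ (smulSX Γ o ν γ ⁻¹' B)) = 0

/-- The measure `m̄` of a subset of `SX`, computed via the fundamental domain `D`. -/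
def mbar (o : X) (μ : Measure (GromovBoundary o × GromovBoundary o))
    (D B : Set (SX o)) : ℝ≥0∞ :=
  bmMeasure o μ (B ∩ D)

/-- Conservativity of the geodesic flow on `(SX, 𝓑_Γ, m̄)`: almost every point of
a `Γ`-invariant set of positive finite measure returns at unboundedly large times. -/
def ConservativeFlow (Γ : Type) [Group Γ] [MulAction Γ X] [IsIsometricSMul Γ X] (o : X)
    (ν : Measure (GromovBoundary o)) (μ : Measure (GromovBoundary o × GromovBoundary o))
    (D : Set (SX o)) : Prop :=
  ∀ B : Set (SX o), MeasurableSet B → GammaInvariant Γ o ν μ B →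
    0 < mbar o μ D B → mbar o μ D B < ⊤ →
    bmMeasure o μ ((B \ {v | ∀ T : ℝ, ∃ t : ℝ, T ≤ t ∧ flowSX o t v ∈ B}) ∩ D) = 0

/-- Ergodicity of the geodesic flow on `(SX, 𝓑_Γ, m̄)`. -/
def ErgodicFlow (Γ : Type) [Group Γ] [MulAction Γ X] [IsIsometricSMul Γ X] (o : X)
    (ν : Measure (GromovBoundary o)) (μ : Measure (GromovBoundary o × GromovBoundary o))
    (D : Set (SX o)) : Prop :=
  ∀ B : Set (SX o), MeasurableSet B → GammaInvariant Γ o ν μ B →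
    (∀ t : ℝ, bmMeasure o μ (B ∆ (flowSX o t ⁻¹' B)) = 0) →
    mbar o μ D B = 0 ∨ mbar o μ D Bᶜ = 0

/-- Ergodicity of the diagonal `Γ`-action on `(∂²X, μ)`. -/
def ErgodicBoundaryAction (Γ : Type) [Group Γ] [MulAction Γ X] [IsIsometricSMul Γ X] (o : X)
    (μ : Measure (GromovBoundary o × GromovBoundary o)) : Prop :=
  ∀ A : Set (GromovBoundary o × GromovBoundary o), MeasurableSet A →
    (∀ γ : Γ, μ (A ∆ (diagSmul o γ ⁻¹' A)) = 0) →
    μ A = 0 ∨ μ Aᶜ = 0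

/-- The Poincaré series of `Γ` diverges at `s = h_Γ`. -/
def Divergent (Γ : Type) [Group Γ] [MulAction Γ X] (o : X) : Prop :=
  ¬ Summable (fun γ : Γ => Real.exp (-(fullCritExp Γ o) * dist (γ • o) o))

end BowenMargulis

/-! ### Almost invariant vectors, co-amenability, properties (T) and (FM) -/

/-- The Koopman representation of the `Γ`-action on the countable set `Y`
almost has invariant vectors: for every finite `S ⊆ Γ` and `ε > 0` there is a
nonzero `φ ∈ ℓ²(Y)` with `‖ρ(γ)φ - φ‖ < ε ‖φ‖` for all `γ ∈ S`
(stated with squared `ℓ²` norms). -/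
def KoopmanAlmostInvariant (Γ Y : Type) [Group Γ] [MulAction Γ Y] : Prop :=
  ∀ S : Finset Γ, ∀ ε : ℝ, 0 < ε → ∃ φ : Y → ℝ, Memℓp φ 2 ∧ φ ≠ 0 ∧
    ∀ γ ∈ S, ∑' y : Y, (φ (γ⁻¹ • y) - φ y) ^ 2 < ε ^ 2 * ∑' y : Y, (φ y) ^ 2

/-- `Γ'` is co-amenable in `Γ`: the Koopman representation of `Γ` on `ℓ²` of the
coset space almost has invariant vectors. -/
def CoAmenable (Γ : Type) [Group Γ] (Γ' : Subgroup Γ) : Prop :=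
  KoopmanAlmostInvariant Γ (Γ ⧸ Γ')

/-- A unitary representation almost has invariant vectors. -/
def AlmostInvariantVectors {Γ : Type} [Group Γ] {H : Type} [NormedAddCommGroup H]
    [InnerProductSpace ℝ H] (ρ : Γ →* (H ≃ₗᵢ[ℝ] H)) : Prop :=
  ∀ S : Finset Γ, ∀ ε : ℝ, 0 < ε → ∃ φ : H, φ ≠ 0 ∧ ∀ γ ∈ S, ‖ρ γ φ - φ‖ < ε * ‖φ‖

/-- Kazhdan's property (T): every unitary representation which almost has
invariant vectors has a nonzero invariant vector. -/
def HasPropertyT (Γ : Type) [Group Γ] : Prop :=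
  ∀ (H : Type) [NormedAddCommGroup H] [InnerProductSpace ℝ H] [CompleteSpace H],
    ∀ ρ : Γ →* (H ≃ₗᵢ[ℝ] H), AlmostInvariantVectors ρ →
      ∃ φ : H, φ ≠ 0 ∧ ∀ γ : Γ, ρ γ φ = φ

/-- Property (FM): every action of `Γ` on a countable set whose Koopman
representation almost has invariant vectors has a finite orbit. -/
def HasPropertyFM (Γ : Type) [Group Γ] : Prop :=
  ∀ (Y : Type) [Countable Y], ∀ (_ : MulAction Γ Y),
    KoopmanAlmostInvariant Γ Y → ∃ y : Y, (MulAction.orbit Γ y).Finite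

/-! ### Twisted Poincaré series -/

/-- The twisted Poincaré series `A(s) = Σ e^{-s d(γ o, o)} ρ(γ)` is bounded. -/
def TwistedBounded {Γ : Type} [Group Γ] [MulAction Γ X] {H : Type}
    [NormedAddCommGroup H] [InnerProductSpace ℝ H]
    (ρ : Γ →* (H ≃ₗᵢ[ℝ] H)) (o : X) (s : ℝ) : Prop :=
  ∃ M : ℝ, ∀ S : Finset Γ,
    ‖∑ γ ∈ S, Real.exp (-s * dist (γ • o) o) •
        ((ρ γ).toLinearIsometry.toContinuousLinearMap : H →L[ℝ] H)‖ ≤ M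

/-- The critical exponent `h_ρ` of the representation `ρ`. -/
def twistedCritExp {Γ : Type} [Group Γ] [MulAction Γ X] {H : Type}
    [NormedAddCommGroup H] [InnerProductSpace ℝ H]
    (ρ : Γ →* (H ≃ₗᵢ[ℝ] H)) (o : X) : ℝ :=
  sInf {s : ℝ | 0 ≤ s ∧ TwistedBounded ρ o s}

/-! ### Word length and the horocone over a Cayley graph -/

/-- The word length of `γ` with respect to the generating set `S`. -/
def wordLength {P : Type} [Group P] (S : Set P) (γ : P) : ℕ :=
  sInf {n : ℕ | ∃ l : List P, l.length = n ∧ (∀ x ∈ l, x ∈ S) ∧ l.prod = γ}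

/-- `horoBase S γ = (√(|γ|² + 4) - |γ|)/2`, so that the orbital distance on the
horocone over the Cayley graph satisfies `e^{-d(γ o, o)} = (horoBase S γ)²`. -/
def horoBase {P : Type} [Group P] (S : Set P) (γ : P) : ℝ :=
  (Real.sqrt ((wordLength S γ : ℝ) ^ 2 + 4) - (wordLength S γ : ℝ)) / 2

/-! ### The twisted Poincaré series of a Koopman representation -/

/-- Boundedness of the twisted Poincaré series
`A(s) = Σ_γ e^{-s d(γ o, o)} ρ(γ)` for the Koopman representation of `Γ`
on `ℓ²` of the coset space of `Γ'` (stated with squared `ℓ²` norms). -/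
def KoopmanTwistedBounded {X : Type} [MetricSpace X] {Γ : Type} [Group Γ]
    [MulAction Γ X] (o : X) (Γ' : Subgroup Γ) (s : ℝ) : Prop :=
  ∃ M : ℝ, ∀ F : Finset Γ, ∀ φ : Γ ⧸ Γ' → ℝ, Memℓp φ 2 →
    ∑' y : Γ ⧸ Γ', (∑ γ ∈ F, Real.exp (-s * dist (γ • o) o) * φ (γ⁻¹ • y)) ^ 2
      ≤ M ^ 2 * ∑' y : Γ ⧸ Γ', (φ y) ^ 2

/-- The critical exponent `h_ρ` of the Koopman representation on `ℓ²(Γ'\Γ)`. -/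
def koopmanCritExp {X : Type} [MetricSpace X] {Γ : Type} [Group Γ]
    [MulAction Γ X] (o : X) (Γ' : Subgroup Γ) : ℝ :=
  sInf {s : ℝ | 0 ≤ s ∧ KoopmanTwistedBounded o Γ' s}

/-! ### Auxiliary lemmas for Statement 10 -/

theorem gp_nonneg (x y z : X) : 0 ≤ gromovProd x y z := by
  have h := dist_triangle x z y
  have h1 : dist z y = dist y z := dist_comm z y
  unfold gromovProd; linarith

theorem gp_le_left (x y z : X) : gromovProd x y z ≤ dist x z := by
  have h := dist_triangle y x z
  have h1 : dist y x = dist x y := dist_comm y x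
  unfold gromovProd; linarith

theorem gp_comm (x y z : X) : gromovProd x y z = gromovProd y x z := by
  unfold gromovProd; rw [dist_comm x y]; ring

/-- A point `w` is within `⟨x,y⟩_w + 2δ` of the point of parameter `⟨w,y⟩_x`
on a geodesic from `x` to `y`. -/
theorem close_to_geodesic {δ : ℝ} (hhyp : GromovHyperbolicWith δ X)
    {c : ℝ → X} {L : ℝ} (hL : 0 ≤ L) (hc : IsGeodesicOn c (Set.Icc 0 L)) (w : X) :
    0 ≤ gromovProd w (c L) (c 0) ∧ gromovProd w (c L) (c 0) ≤ L ∧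
      dist w (c (gromovProd w (c L) (c 0))) ≤ gromovProd (c 0) (c L) w + 2 * δ := by
  set t₀ := gromovProd w (c L) (c 0) with ht₀def
  have hxy : dist (c 0) (c L) = L := by
    have h := hc 0 ⟨le_refl 0, hL⟩ L ⟨hL, le_refl L⟩
    rw [h, abs_of_nonpos (by linarith)]; ring
  have h0 : 0 ≤ t₀ := gp_nonneg _ _ _
  have h1 : t₀ ≤ L := by
    rw [ht₀def]
    unfold gromovProd
    have h3 : dist w (c 0) ≤ dist w (c L) + dist (c L) (c 0) := dist_triangle _ _ _
    have e1 : dist (c L) (c 0) = L := by rw [dist_comm]; exact hxy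
    linarith [dist_nonneg (x := w) (y := c L)]
  have hmem : t₀ ∈ Set.Icc (0:ℝ) L := ⟨h0, h1⟩
  have hxp : dist (c 0) (c t₀) = t₀ := by
    have h := hc 0 ⟨le_refl 0, hL⟩ t₀ hmem
    rw [h, abs_of_nonpos (by linarith)]; ring
  have hyp' : dist (c t₀) (c L) = L - t₀ := by
    have h := hc t₀ hmem L ⟨hL, le_refl L⟩
    rw [h, abs_of_nonpos (by linarith)]; ring
  refine ⟨h0, h1, ?_⟩
  have h4 := hhyp (c 0) w (c L) (c t₀)
  have heq : t₀ = (dist w (c 0) + dist (c L) (c 0) - dist w (c L)) / 2 := ht₀def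
  have e1 : dist (c L) (c 0) = L := by rw [dist_comm]; exact hxy
  have e2 : dist w (c 0) = dist (c 0) w := dist_comm _ _
  have e3 : dist w (c L) = dist (c L) w := dist_comm _ _
  have e4 : dist w (c t₀) = dist (c t₀) w := dist_comm _ _
  have e5 : dist (c L) (c t₀) = dist (c t₀) (c L) := dist_comm _ _
  rcases le_total (gromovProd (c 0) w (c t₀)) (gromovProd w (c L) (c t₀)) with hmin | hmin
  · rw [min_eq_left hmin] at h4
    unfold gromovProd at h4 hmin ⊢
    linarith
  · rw [min_eq_right hmin] at h4
    unfold gromovProd at h4 hmin ⊢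
    linarith

/-- The orbit of a compact set under a proper isometric action is closed. -/
theorem orbit_closed' {Γ : Type} [Group Γ] [MulAction Γ X] [IsIsometricSMul Γ X]
    [ProperSpace X] (hact : ProperAction Γ X) {k : Set X} (hk : IsCompact k) :
    IsClosed (⋃ g : Γ, g • k) := by
  refine isClosed_of_closure_subset (fun z hz => ?_)
  have hLzc : IsCompact (k ∪ Metric.closedBall z 1) := hk.union (isCompact_closedBall z 1)
  set G : Set Γ := {g : Γ | ∃ x ∈ k, g • x ∈ Metric.closedBall z 1} with hG
  have hGfin : G.Finite := by
    refine (hact _ hLzc).subset (fun g hg => ?_)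
    obtain ⟨x, hx, hgx⟩ := hg
    exact ⟨x, Or.inl hx, Or.inr hgx⟩
  have hsub : (⋃ g : Γ, g • k) ⊆ (⋃ g ∈ G, g • k) ∪ (Metric.ball z 1)ᶜ := by
    intro y hy
    obtain ⟨g, hg⟩ := Set.mem_iUnion.mp hy
    by_cases hyb : y ∈ Metric.ball z 1
    · left
      refine Set.mem_biUnion ?_ hg
      obtain ⟨x, hx, hgx⟩ := hg
      have hgx' : g • x = y := hgx
      exact ⟨x, hx, by rw [hgx']; exact Metric.ball_subset_closedBall hyb⟩
    · right; exact hyb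
  have hclosed : IsClosed ((⋃ g ∈ G, g • k) ∪ (Metric.ball z 1)ᶜ) := by
    refine IsClosed.union ?_ (Metric.isOpen_ball.isClosed_compl)
    refine Set.Finite.isClosed_biUnion hGfin (fun g _ => ?_)
    have hcpt : IsCompact (g • k) := by
      rw [← Set.image_smul]
      exact hk.image (isometry_smul X g).continuous
    exact hcpt.isClosed
  have h2 := closure_mono hsub
  rw [hclosed.closure_eq] at h2
  rcases h2 hz with h | h
  · obtain ⟨g, -, hgk⟩ := Set.mem_iUnion₂.mp h
    exact Set.mem_iUnion.mpr ⟨g, hgk⟩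
  · exact absurd (Metric.mem_ball_self one_pos) h

theorem one_mem_gammaK {Γ : Type} [Group Γ] [MulAction Γ X] {k : Set X} {o : X}
    (hok : o ∈ k) : (1 : Γ) ∈ gammaK Γ k := by
  have hdist : dist o ((1 : Γ) • o) = 0 := by rw [one_smul, dist_self]
  refine ⟨o, hok, o, hok, fun _ => o, rfl, (one_smul Γ o).symm, ?_, ?_⟩
  · intro s hs t ht
    rw [hdist] at hs ht
    have hs0 : s = 0 := le_antisymm hs.2 hs.1
    have ht0 : t = 0 := le_antisymm ht.2 ht.1
    rw [hs0, ht0, dist_self]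
    simp
  · intro z hz
    obtain ⟨⟨s, -, hzs⟩, -⟩ := hz
    have : o = z := hzs
    exact Or.inl (this ▸ hok)

/-- Let `X` be a proper geodesic `δ`-hyperbolic space, `Γ` a
group acting properly by isometries on `X` with basepoint `o`, `k ⊆ X` a compact
set containing `o`, and `K` the closed `6δ`-neighbourhood of `k`. Then there exist
a finite subset `S ⊆ Γ` and `r ≥ 0` such that for every `T ≥ 0`,
`U_K^T ∩ Γ·o` is contained in the union of the shadows `O_o(βo,r)` over all
`β ∈ S·Γ_k` with `d(o,βo) ≥ T - r`. -/
theorem UKT_covered_by_shadows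
    {X : Type} [MetricSpace X] [ProperSpace X]
    {Γ : Type} [Group Γ] [MulAction Γ X] [IsIsometricSMul Γ X]
    (δ : ℝ) (hδ : 0 < δ) (hhyp : GromovHyperbolicWith δ X) (hgeo : GeodesicSpace X)
    (hact : ProperAction Γ X) (o : X)
    (k : Set X) (hk : IsCompact k) (hok : o ∈ k)
    (K : Set X) (hKdef : K = {z : X | ∃ w ∈ k, dist z w ≤ 6 * δ}) :
    ∃ (S : Finset Γ) (r : ℝ), 0 ≤ r ∧
      ∀ T : ℝ, 0 ≤ T → ∀ γ : Γ, Bord.ofX o (γ • o) ∈ UKT o Γ K T →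
        ∃ β : Γ, (∃ s ∈ S, ∃ g ∈ gammaK Γ k, β = s * g) ∧
          T - r ≤ dist o (β • o) ∧
          Bord.ofX o (γ • o) ∈ shadow o (β • o) r := by
  classical
  -- a bound for k around o
  obtain ⟨R₀, hR₀⟩ := hk.isBounded.subset_closedBall o
  set D : ℝ := max R₀ 0 with hDdef
  have hD0 : 0 ≤ D := le_max_right _ _
  have hDk : ∀ w ∈ k, dist o w ≤ D := by
    intro w hw
    rw [dist_comm]
    exact le_trans (Metric.mem_closedBall.mp (hR₀ hw)) (le_max_left _ _)
  set R₁ : ℝ := D + 10 * δ + 1 with hR₁def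
  have hR₁0 : 0 ≤ R₁ := by rw [hR₁def]; linarith
  set C : ℝ := δ + 2 with hCdef
  have hC0 : 0 < C := by rw [hCdef]; linarith
  set r : ℝ := C + D + R₁ with hrdef
  have hr0 : 0 ≤ r := by rw [hrdef]; linarith
  have hrD : D ≤ r := by rw [hrdef]; linarith
  have hSfin := hact (Metric.closedBall o (D + R₁)) (isCompact_closedBall o (D + R₁))
  have hoball : o ∈ Metric.closedBall o (D + R₁) := Metric.mem_closedBall_self (by linarith)
  have h1S : (1 : Γ) ∈ hSfin.toFinset := by
    rw [Set.Finite.mem_toFinset]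
    exact ⟨o, hoball, by rw [one_smul]; exact hoball⟩
  have hone : (1 : Γ) ∈ gammaK Γ k := one_mem_gammaK hok
  refine ⟨hSfin.toFinset, r, hr0, ?_⟩
  intro T hT γ hmem
  obtain ⟨ξ, hξLK, hξT⟩ := hmem
  obtain ⟨c', hc'ray, hc'0K, hc'ends, hc'avoid⟩ := hξLK
  obtain ⟨hseq, hmk⟩ := hc'ends
  -- a geodesic from o to γ • o
  obtain ⟨c, hc0, hcd, hcgeo⟩ := hgeo o (γ • o)
  set d : ℝ := dist o (γ • o) with hddef
  have hd0 : 0 ≤ d := by rw [hddef]; exact dist_nonneg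
  -- extract the quantitative input from the Gromov product hypothesis
  have hgp : T ≤ gpPB o o (γ • o) ξ := by
    have h1 : (T : EReal) ≤ ((gpPB o o (γ • o) ξ : ℝ) : EReal) := hξT
    exact_mod_cast h1
  have hbdd : Filter.IsBoundedUnder (· ≥ ·) Filter.atTop
      (fun n : ℕ => gromovProd (γ • o) (c' n) o) :=
    Filter.isBoundedUnder_of ⟨0, fun n => gp_nonneg _ _ _⟩
  have key : T ≤ Filter.liminf (fun n : ℕ => gromovProd (γ • o) (c' n) o) Filter.atTop := by
    refine hgp.trans (csInf_le ?_ ?_)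
    · refine ⟨0, fun x hx => ?_⟩
      obtain ⟨u', -, rfl⟩ := hx
      refine Filter.le_liminf_of_le ?_ (Filter.Eventually.of_forall (fun n => gp_nonneg _ _ _))
      exact Filter.isCoboundedUnder_ge_of_eventually_le _
        (Filter.Eventually.of_forall (fun n => gp_le_left _ _ _))
    · exact ⟨⟨fun n : ℕ => c' n, hseq⟩, hmk, rfl⟩
  have hTd : T ≤ d := by
    refine key.trans (Filter.liminf_le_of_frequently_le
      (Filter.Frequently.of_forall (fun n => ?_)) hbdd)
    have := gp_le_left (γ • o) (c' n) o
    rw [hddef]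
    rw [dist_comm]
    exact this
  obtain ⟨n, hn⟩ : ∃ n : ℕ, T - 1 < gromovProd (γ • o) (c' n) o := by
    by_contra hcon
    push_neg at hcon
    have := Filter.liminf_le_of_frequently_le (Filter.Frequently.of_forall hcon) hbdd
    linarith
  have hc'0 : dist o (c' 0) ≤ D + 6 * δ := by
    rw [hKdef] at hc'0K
    obtain ⟨w, hw, hwd⟩ := hc'0K
    calc dist o (c' 0) ≤ dist o w + dist w (c' 0) := dist_triangle _ _ _
    _ ≤ D + 6 * δ := add_le_add (hDk w hw) (by rw [dist_comm]; exact hwd)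
  -- the crux: meeting points of the geodesic with Γ·k at parameter ≤ T - C are near o
  have crux : ∀ t ∈ Set.Icc 0 d, c t ∈ (⋃ g : Γ, g • k) → t ≤ T - C → t ≤ R₁ := by
    intro t ht htk htT
    have htT' : t ≤ T - (δ + 2) := by rw [← hCdef]; exact htT
    by_cases hbig : t ≤ D + 8 * δ + 1
    · rw [hR₁def]; linarith
    push_neg at hbig
    have hdo : dist o (c t) = t := by
      have h := hcgeo 0 ⟨le_refl 0, hd0⟩ t ht
      rw [hc0] at h
      rw [h, abs_of_nonpos (by linarith [ht.1])]; ring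
    have hdg : dist (c t) (γ • o) = d - t := by
      have h := hcgeo t ht d ⟨hd0, le_refl d⟩
      rw [hcd] at h
      rw [h, abs_of_nonpos (by linarith [ht.2])]; ring
    have h4 := hhyp o (c' n) (γ • o) (c t)
    have hzero : gromovProd o (γ • o) (c t) = 0 := by
      unfold gromovProd
      have e1 : dist (γ • o) (c t) = d - t := by rw [dist_comm]; exact hdg
      rw [hdo, e1, ← hddef]
      ring
    have h5 : δ + 1 ≤ gromovProd (c' n) (γ • o) (c t) := by
      have hge := gromovProd_ge (c' n) (γ • o) o (c t)
      have hcm : gromovProd (c' n) (γ • o) o = gromovProd (γ • o) (c' n) o := gp_comm _ _ _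
      rw [hdo] at hge
      linarith
    have h6 : gromovProd o (c' n) (c t) ≤ δ := by
      rcases le_total (gromovProd o (c' n) (c t)) (gromovProd (c' n) (γ • o) (c t)) with hm | hm
      · rw [min_eq_left hm] at h4; linarith
      · rw [min_eq_right hm] at h4; linarith
    have h7 := hhyp o (c' 0) (c' n) (c t)
    have h8 : 2 * δ < gromovProd o (c' 0) (c t) := by
      unfold gromovProd
      have htri : dist o (c t) ≤ dist o (c' 0) + dist (c' 0) (c t) := dist_triangle _ _ _
      rw [hdo] at htri
      rw [hdo]
      linarith
    have h9 : gromovProd (c' 0) (c' n) (c t) ≤ 2 * δ := by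
      rcases le_total (gromovProd o (c' 0) (c t)) (gromovProd (c' 0) (c' n) (c t)) with hm | hm
      · rw [min_eq_left hm] at h7; linarith
      · rw [min_eq_right hm] at h7; linarith
    have hseg : IsGeodesicOn c' (Set.Icc 0 ((n : ℕ) : ℝ)) :=
      fun s hs t' ht' => hc'ray s hs.1 t' ht'.1
    obtain ⟨ht₀0, -, hA⟩ := close_to_geodesic hhyp (Nat.cast_nonneg n) hseg (c t)
    set t₀ := gromovProd (c t) (c' ((n : ℕ) : ℝ)) (c' 0) with ht₀def
    have hclose : dist (c t) (c' t₀) ≤ 4 * δ := by linarith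
    obtain ⟨g, hgmem⟩ := Set.mem_iUnion.mp htk
    obtain ⟨w₀, hw₀, hgw⟩ := hgmem
    have hgw' : g • w₀ = c t := hgw
    have hKmem : c' t₀ ∈ g • K := by
      rw [Set.mem_smul_set_iff_inv_smul_mem, hKdef]
      refine ⟨w₀, hw₀, ?_⟩
      have e : dist (g⁻¹ • c' t₀) w₀ = dist (c' t₀) (c t) := by
        rw [← dist_smul g (g⁻¹ • c' t₀) w₀, smul_inv_smul, hgw']
      rw [e]
      linarith [dist_comm (c t) (c' t₀), hclose]
    have hc't₀K : c' t₀ ∈ K := by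
      refine hc'avoid ⟨⟨t₀, ht₀0, rfl⟩, Set.mem_iUnion.mpr ⟨g, hKmem⟩⟩
    have hc't₀K' := hc't₀K
    rw [hKdef] at hc't₀K'
    obtain ⟨w₁, hw₁, hw₁d⟩ := hc't₀K'
    have h10 : dist o (c t) ≤ dist o (c' t₀) + dist (c' t₀) (c t) := dist_triangle _ _ _
    have h11 : dist o (c' t₀) ≤ dist o w₁ + dist w₁ (c' t₀) := dist_triangle _ _ _
    have h12 : dist w₁ (c' t₀) = dist (c' t₀) w₁ := dist_comm _ _
    have h13 := hDk w₁ hw₁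
    rw [hdo] at h10
    rw [hR₁def]
    linarith [dist_comm (c t) (c' t₀), hclose]
  -- now the two cases
  by_cases hTC : T < C
  · -- small T : use β = 1
    refine ⟨1, ⟨1, h1S, 1, hone, (one_mul 1).symm⟩, ?_, ?_⟩
    · rw [one_smul, dist_self]
      linarith
    · rw [one_smul]
      refine ⟨c, Set.Icc 0 d, Or.inl ⟨γ • o, rfl, by rw [hddef], hc0, ?_, hcgeo⟩,
        0, ⟨le_refl 0, hd0⟩, ?_⟩
      · rw [← hddef]; exact hcd
      · rw [hc0]
        exact Metric.mem_closedBall_self hr0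
  · push_neg at hTC
    set τ : ℝ := T - C with hτdef
    have hτ0 : 0 ≤ τ := by rw [hτdef]; linarith
    have hτd : τ ≤ d := by rw [hτdef]; linarith
    have hΓk : IsClosed (⋃ g : Γ, g • k) := orbit_closed' hact hk
    set E : Set ℝ := Set.Icc 0 τ ∩ {t | c t ∈ ⋃ g : Γ, g • k} with hEdef
    set F : Set ℝ := Set.Icc τ d ∩ {t | c t ∈ ⋃ g : Γ, g • k} with hFdef
    have hoE : (0:ℝ) ∈ E := by
      refine ⟨⟨le_refl 0, hτ0⟩, ?_⟩
      show c 0 ∈ ⋃ g : Γ, g • k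
      rw [hc0]
      exact Set.mem_iUnion.mpr ⟨1, Set.mem_smul_set.mpr ⟨o, hok, one_smul Γ o⟩⟩
    have hdF : d ∈ F := by
      refine ⟨⟨hτd, le_refl d⟩, ?_⟩
      show c d ∈ ⋃ g : Γ, g • k
      rw [hcd]
      exact Set.mem_iUnion.mpr ⟨γ, Set.mem_smul_set.mpr ⟨o, hok, rfl⟩⟩
    have hEbdd : BddAbove E := ⟨τ, fun t ht => ht.1.2⟩
    have hFbdd : BddBelow F := ⟨τ, fun t ht => ht.1.1⟩
    set u := sSup E with hudef
    set v := sInf F with hvdef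
    have hu0 : 0 ≤ u := by rw [hudef]; exact le_csSup hEbdd hoE
    have huτ : u ≤ τ := by rw [hudef]; exact csSup_le ⟨0, hoE⟩ (fun t ht => ht.1.2)
    have hτv : τ ≤ v := by rw [hvdef]; exact le_csInf ⟨d, hdF⟩ (fun t ht => ht.1.1)
    have hvd : v ≤ d := by rw [hvdef]; exact csInf_le hFbdd hdF
    have hud : u ∈ Set.Icc 0 d := ⟨hu0, huτ.trans hτd⟩
    have hvI : v ∈ Set.Icc 0 d := ⟨hτ0.trans hτv, hvd⟩
    have hcu : c u ∈ ⋃ g : Γ, g • k := by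
      have hclo : c u ∈ closure (⋃ g : Γ, g • k) := by
        rw [Metric.mem_closure_iff]
        intro ε hε
        have hlt : u - ε < sSup E := by rw [← hudef]; linarith
        obtain ⟨t, htE, htlt⟩ := exists_lt_of_lt_csSup ⟨0, hoE⟩ hlt
        have htu : t ≤ u := by rw [hudef]; exact le_csSup hEbdd htE
        refine ⟨c t, htE.2, ?_⟩
        have heq : dist (c u) (c t) = |u - t| :=
          hcgeo u hud t ⟨htE.1.1, htE.1.2.trans hτd⟩
        rw [heq, abs_of_nonneg (by linarith)]
        linarith
      rwa [hΓk.closure_eq] at hclo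
    have hcv : c v ∈ ⋃ g : Γ, g • k := by
      have hclo : c v ∈ closure (⋃ g : Γ, g • k) := by
        rw [Metric.mem_closure_iff]
        intro ε hε
        have hlt : sInf F < v + ε := by rw [← hvdef]; linarith
        obtain ⟨t, htF, htlt⟩ := exists_lt_of_csInf_lt ⟨d, hdF⟩ hlt
        have hvt : v ≤ t := by rw [hvdef]; exact csInf_le hFbdd htF
        refine ⟨c t, htF.2, ?_⟩
        have heq : dist (c v) (c t) = |v - t| :=
          hcgeo v hvI t ⟨hτ0.trans htF.1.1, htF.1.2⟩
        rw [heq, abs_of_nonpos (by linarith)]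
        linarith
      rwa [hΓk.closure_eq] at hclo
    have huR₁ : u ≤ R₁ := by
      exact crux u hud hcu huτ
    obtain ⟨h₁, hcu'⟩ := Set.mem_iUnion.mp hcu
    obtain ⟨w₀, hw₀, hhw₀⟩ := hcu'
    have hhw : h₁ • w₀ = c u := hhw₀
    obtain ⟨g', hcv'⟩ := Set.mem_iUnion.mp hcv
    obtain ⟨y', hy', hgy⟩ := hcv'
    have hgy' : g' • y' = c v := hgy
    have hdcu : dist o (c u) = u := by
      have hh := hcgeo 0 ⟨le_refl 0, hd0⟩ u hud
      rw [hc0] at hh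
      rw [hh, abs_of_nonpos (by linarith)]; ring
    have hdcv : dist o (c v) = v := by
      have hh := hcgeo 0 ⟨le_refl 0, hd0⟩ v hvI
      rw [hc0] at hh
      rw [hh, abs_of_nonpos (by linarith [hvI.1])]; ring
    have hh₁S : h₁ ∈ hSfin.toFinset := by
      rw [Set.Finite.mem_toFinset]
      refine ⟨w₀, ?_, ?_⟩
      · exact Metric.mem_closedBall.mpr (by rw [dist_comm]; linarith [hDk w₀ hw₀])
      · rw [hhw]
        refine Metric.mem_closedBall.mpr ?_
        rw [dist_comm, hdcu]
        linarith
    have hbetween : ∀ t ∈ Set.Icc u v, c t ∈ (⋃ g : Γ, g • k) → t = u ∨ t = v := by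
      intro t ht htk
      rcases le_total t τ with hcase | hcase
      · left
        have htE : t ∈ E := ⟨⟨hu0.trans ht.1, hcase⟩, htk⟩
        have h2 : t ≤ u := by rw [hudef]; exact le_csSup hEbdd htE
        exact le_antisymm h2 ht.1
      · right
        have htF : t ∈ F := ⟨⟨hcase, ht.2.trans hvd⟩, htk⟩
        have h2 : v ≤ t := by rw [hvdef]; exact csInf_le hFbdd htF
        exact le_antisymm ht.2 h2
    set g : Γ := h₁⁻¹ * g' with hgdef
    have huv : u ≤ v := huτ.trans hτv
    have hdxy : dist w₀ (g • y') = v - u := by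
      have e1 : g • y' = h₁⁻¹ • c v := by rw [hgdef, mul_smul, hgy']
      have e2 : w₀ = h₁⁻¹ • c u := by rw [← hhw, inv_smul_smul]
      rw [e1, e2, dist_smul]
      rw [hcgeo u hud v hvI, abs_of_nonpos (by linarith)]; ring
    have hggk : g ∈ gammaK Γ k := by
      refine ⟨w₀, hw₀, y', hy', fun s => h₁⁻¹ • c (u + s), ?_, ?_, ?_, ?_⟩
      · show h₁⁻¹ • c (u + 0) = w₀
        rw [add_zero, ← hhw, inv_smul_smul]
      · show h₁⁻¹ • c (u + dist w₀ (g • y')) = g • y'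
        rw [hdxy, show u + (v - u) = v from by ring, hgdef, mul_smul, hgy']
      · intro s hs t' ht'
        rw [hdxy] at hs ht'
        have e := hcgeo (u + s) ⟨by linarith [hs.1], by linarith [hs.2]⟩
          (u + t') ⟨by linarith [ht'.1], by linarith [ht'.2]⟩
        show dist (h₁⁻¹ • c (u + s)) (h₁⁻¹ • c (u + t')) = |s - t'|
        rw [dist_smul, e]
        congr 1
        ring
      · intro z hz
        obtain ⟨hz1, hz2⟩ := hz
        obtain ⟨s, hs, hzs⟩ := hz1
        rw [hdxy] at hs
        have hzs' : h₁⁻¹ • c (u + s) = z := hzs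
        obtain ⟨a, haz⟩ := Set.mem_iUnion.mp hz2
        obtain ⟨wa, hwa, hawz⟩ := haz
        have hawz' : a • wa = z := hawz
        have hct : c (u + s) ∈ (⋃ b : Γ, b • k) := by
          refine Set.mem_iUnion.mpr ⟨h₁ * a, Set.mem_smul_set.mpr ⟨wa, hwa, ?_⟩⟩
          rw [mul_smul, hawz', ← hzs', smul_inv_smul]
        rcases hbetween (u + s) ⟨by linarith [hs.1], by linarith [hs.2]⟩ hct with he | he
        · left
          have hs0 : s = 0 := by linarith [he]
          rw [hs0, add_zero, ← hhw, inv_smul_smul] at hzs'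
          exact hzs' ▸ hw₀
        · right
          have hsv : u + s = v := he
          rw [hsv] at hzs'
          refine Set.mem_smul_set.mpr ⟨y', hy', ?_⟩
          rw [← hzs', hgdef, mul_smul, hgy']
    have hβ : (h₁ * g) • o = g' • o := by
      rw [hgdef, show h₁ * (h₁⁻¹ * g') = g' from by group]
    have hdg'o : dist (c v) (g' • o) ≤ D := by
      rw [← hgy', dist_smul, dist_comm]
      exact hDk y' hy'
    refine ⟨h₁ * g, ⟨h₁, hh₁S, g, hggk, rfl⟩, ?_, ?_⟩
    · rw [hβ]
      have hv1 : v ≤ dist o (g' • o) + D := by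
        calc v = dist o (c v) := hdcv.symm
        _ ≤ dist o (g' • o) + dist (g' • o) (c v) := dist_triangle _ _ _
        _ ≤ dist o (g' • o) + D := by rw [dist_comm (g' • o) (c v)]; linarith
      have hτv' : T - C ≤ v := by rw [hτdef] at hτv; exact hτv
      rw [hrdef]
      linarith
    · rw [hβ]
      refine ⟨c, Set.Icc 0 d, Or.inl ⟨γ • o, rfl, by rw [hddef], hc0, ?_, hcgeo⟩,
        v, hvI, ?_⟩
      · rw [← hddef]; exact hcd
      · exact Metric.mem_closedBall.mpr (by linarith)


end SPR
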